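/- (Splitting of entropy, Statement 2) Let γ₁, γ₂, p₁, p₂ ∈ [0,1] satisfy max{0, 2γ₁-1} ≤ p₁ ≤ γ₁, max{0, 2γ₂-1} ≤ p₂ ≤ γ₂, and set p := (p₁+p₂)/2. If p ≤ γ₁·γ₂, then H₄(p, γ₁-p, γ₂-p, 1+p-γ₁-γ₂) ≥ (1/2)·(H₄(p₁, γ₁-p₁, γ₁-p₁, 1+p₁-2γ₁) + H₄(p₂, γ₂-p₂, γ₂-p₂, 1+p₂-2γ₂)). -/

import Mathlib

open Real

set_option maxHeartbeats 1000000


private lemma ls {a b A B : ℝ} (ha : 0 ≤ a) (hb : 0 ≤ b) (hA : 0 < A) (hB : 0 < B) :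
    (a + b) * Real.log (a + b) - (a + b) * Real.log (A + B) ≤
      (a * Real.log a - a * Real.log A) + (b * Real.log b - b * Real.log B) := by
  rcases eq_or_lt_of_le ha with rfl | ha'
  · have h := mul_le_mul_of_nonneg_left (Real.log_le_log hB (show B ≤ A + B by linarith)) hb
    simp only [zero_add, zero_mul, sub_zero, zero_sub]
    linarith
  rcases eq_or_lt_of_le hb with rfl | hb'
  · have h := mul_le_mul_of_nonneg_left (Real.log_le_log hA (show A ≤ A + B by linarith)) ha'.le
    simp only [add_zero, zero_mul]
    linarith
  · have hs : 0 < a + b := by linarith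
    have hS : 0 < A + B := by linarith
    have k1 : Real.log (a+b) + Real.log A - Real.log (A+B) - Real.log a
        ≤ (a+b)*A/((A+B)*a) - 1 := by
      have hpos : 0 < (a+b)*A/((A+B)*a) := by positivity
      have h := Real.log_le_sub_one_of_pos hpos
      rw [Real.log_div (mul_pos hs hA).ne' (mul_pos hS ha').ne',
        Real.log_mul hs.ne' hA.ne', Real.log_mul hS.ne' ha'.ne'] at h
      linarith
    have k2 : Real.log (a+b) + Real.log B - Real.log (A+B) - Real.log b
        ≤ (a+b)*B/((A+B)*b) - 1 := by
      have hpos : 0 < (a+b)*B/((A+B)*b) := by positivity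
      have h := Real.log_le_sub_one_of_pos hpos
      rw [Real.log_div (mul_pos hs hB).ne' (mul_pos hS hb').ne',
        Real.log_mul hs.ne' hB.ne', Real.log_mul hS.ne' hb'.ne'] at h
      linarith
    have m1 := mul_le_mul_of_nonneg_left k1 ha'.le
    have m2 := mul_le_mul_of_nonneg_left k2 hb'.le
    have e1 : a * ((a+b)*A/((A+B)*a) - 1) = (a+b)*A/(A+B) - a := by
      field_simp
    have e2 : b * ((a+b)*B/((A+B)*b) - 1) = (a+b)*B/(A+B) - b := by
      field_simp
    have e3 : (a+b)*A/(A+B) + (a+b)*B/(A+B) = a + b := by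
      field_simp
    nlinarith [m1, m2]

private lemma ls3 {x1 x2 x3 r1 r2 r3 : ℝ} (h1 : 0 ≤ x1) (h2 : 0 ≤ x2) (h3 : 0 ≤ x3)
    (hr1 : 0 < r1) (hr2 : 0 < r2) (hr3 : 0 < r3) (hsum : x1 + x2 + x3 = r1 + r2 + r3) :
    0 ≤ (x1 * Real.log x1 - x1 * Real.log r1) + (x2 * Real.log x2 - x2 * Real.log r2)
      + (x3 * Real.log x3 - x3 * Real.log r3) := by
  have hA := ls h1 h2 hr1 hr2
  have hB := ls (add_nonneg h1 h2) h3 (show (0:ℝ) < r1 + r2 by linarith) hr3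
  have e : x1 + x2 + x3 = (r1 + r2) + r3 := by linarith
  rw [e] at hB
  simp only [sub_self] at hB
  linarith

private lemma dbl {x r : ℝ} (hx : 0 ≤ x) (hr : 0 < r) :
    2*x * Real.log (2*x) - 2*x * Real.log (2*r) = 2*(x * Real.log x - x * Real.log r) := by
  rcases eq_or_lt_of_le hx with rfl | hx'
  · simp
  · rw [Real.log_mul two_ne_zero hx'.ne', Real.log_mul two_ne_zero hr.ne']; ring

private lemma half_step {u : ℝ} (hu : 0 ≤ u) :
    (u+1) * (Real.log (u+1) - Real.log 2) ≤ u * Real.log u := by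
  have h := ls hu (zero_le_one) (one_pos) (one_pos)
  norm_num [Real.log_one] at h
  linarith

private lemma core (γ1 γ2 p1 p2 : ℝ) (hg1 : 0 < γ1) (hg1' : γ1 < 1) (hg2 : 0 < γ2) (hg2' : γ2 < 1)
    (hp10 : 0 ≤ p1) (hp1u : p1 ≤ γ1) (hb1 : 0 ≤ 1 + p1 - 2*γ1)
    (hp20 : 0 ≤ p2) (hp2u : p2 ≤ γ2) (hb2 : 0 ≤ 1 + p2 - 2*γ2)
    (hp : (p1 + p2) / 2 ≤ γ1 * γ2) :
    (-(p1 * Real.log p1) - (γ1 - p1) * Real.log (γ1 - p1) - (γ1 - p1) * Real.log (γ1 - p1)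
        - (1 + p1 - 2 * γ1) * Real.log (1 + p1 - 2 * γ1))
      + (-(p2 * Real.log p2) - (γ2 - p2) * Real.log (γ2 - p2) - (γ2 - p2) * Real.log (γ2 - p2)
        - (1 + p2 - 2 * γ2) * Real.log (1 + p2 - 2 * γ2))
      ≤ 2 * (-((p1 + p2) / 2 * Real.log ((p1 + p2) / 2))
        - (γ1 - (p1 + p2) / 2) * Real.log (γ1 - (p1 + p2) / 2)
        - (γ2 - (p1 + p2) / 2) * Real.log (γ2 - (p1 + p2) / 2)
        - (1 + (p1 + p2) / 2 - γ1 - γ2) * Real.log (1 + (p1 + p2) / 2 - γ1 - γ2)) := by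
  set p := (p1 + p2) / 2 with hp_def
  have hg1c : (0:ℝ) < 1 - γ1 := by linarith
  have hg2c : (0:ℝ) < 1 - γ2 := by linarith
  have hp0 : 0 ≤ p := by rw [hp_def]; linarith
  have hq0 : 0 ≤ 1 + p - γ1 - γ2 := by rw [hp_def]; linarith
  have ha0 : 0 < γ1 - p := by linarith [mul_pos hg1 hg2c]
  have hb0 : 0 < γ2 - p := by linarith [mul_pos hg2 hg1c]
  have hG0 : 0 < (γ1 + γ2)/2 - p := by linarith
  have hR1b : 0 < (γ1*γ1 + γ2*γ2)/2 := by positivity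
  have hw : 0 < (γ1*(1-γ1) + γ2*(1-γ2))/2 := by positivity
  have hR4b : 0 < ((1-γ1)*(1-γ1) + (1-γ2)*(1-γ2))/2 := by positivity
  -- convexity components
  have c1 := ls hp10 hp20 (mul_pos hg1 hg1) (mul_pos hg2 hg2)
  rw [show p1 + p2 = 2*p by rw [hp_def]; ring,
    show γ1*γ1 + γ2*γ2 = 2*((γ1*γ1 + γ2*γ2)/2) by ring, dbl hp0 hR1b] at c1
  have c2 := ls (show (0:ℝ) ≤ γ1 - p1 by linarith) (show (0:ℝ) ≤ γ2 - p2 by linarith)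
    (mul_pos hg1 hg1c) (mul_pos hg2 hg2c)
  rw [show γ1 - p1 + (γ2 - p2) = 2*((γ1 + γ2)/2 - p) by rw [hp_def]; ring,
    show γ1*(1-γ1) + γ2*(1-γ2) = 2*((γ1*(1-γ1) + γ2*(1-γ2))/2) by ring,
    dbl hG0.le hw] at c2
  have c3 := ls hb1 hb2 (mul_pos hg1c hg1c) (mul_pos hg2c hg2c)
  rw [show 1 + p1 - 2*γ1 + (1 + p2 - 2*γ2) = 2*(1 + p - γ1 - γ2) by rw [hp_def]; ring,
    show (1-γ1)*(1-γ1) + (1-γ2)*(1-γ2) = 2*(((1-γ1)*(1-γ1) + (1-γ2)*(1-γ2))/2) by ring,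
    dbl hq0 hR4b] at c3
  -- the antitone function
  set φ : ℝ → ℝ := fun t =>
      t * (Real.log (γ1*γ2) - Real.log ((γ1*γ1 + γ2*γ2)/2))
      + (1 + t - γ1 - γ2) * (Real.log ((1-γ1)*(1-γ2))
          - Real.log (((1-γ1)*(1-γ1) + (1-γ2)*(1-γ2))/2))
      + 2 * (((γ1+γ2)/2 - t) * Real.log ((γ1+γ2)/2 - t))
      - 2 * (((γ1+γ2)/2 - t) * Real.log ((γ1*(1-γ1) + γ2*(1-γ2))/2))
      - (γ1 - t) * Real.log (γ1 - t) + (γ1 - t) * Real.log (γ1*(1-γ2))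
      - (γ2 - t) * Real.log (γ2 - t) + (γ2 - t) * Real.log (γ2*(1-γ1)) with hφ
  have hcont : Continuous φ := by
    rw [hφ]
    have k : ∀ c : ℝ, Continuous fun t : ℝ => (c - t) * Real.log (c - t) := fun c =>
      Real.continuous_mul_log.comp (continuous_const.sub continuous_id)
    exact ((((((((continuous_id.mul continuous_const).add
      ((((continuous_const.add continuous_id).sub continuous_const).sub
        continuous_const).mul continuous_const)).add
      (continuous_const.mul (k _))).sub
      (continuous_const.mul ((continuous_const.sub continuous_id).mul continuous_const))).sub
      (k γ1)).add ((continuous_const.sub continuous_id).mul continuous_const)).sub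
      (k γ2)).add ((continuous_const.sub continuous_id).mul continuous_const))
  have hder : ∀ t ∈ interior (Set.Icc (max 0 (γ1+γ2-1)) (γ1*γ2)),
      HasDerivAt φ (Real.log (γ1 - t) + Real.log (γ2 - t) - 2*Real.log ((γ1+γ2)/2 - t)
        + (2*Real.log ((γ1*(1-γ1) + γ2*(1-γ2))/2) - Real.log ((γ1*γ1 + γ2*γ2)/2)
            - Real.log (((1-γ1)*(1-γ1) + (1-γ2)*(1-γ2))/2))
        + (Real.log (γ1*γ2) + Real.log ((1-γ1)*(1-γ2)) - Real.log (γ1*(1-γ2))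
            - Real.log (γ2*(1-γ1)))) t := by
    intro t ht
    rw [interior_Icc] at ht
    obtain ⟨ht1, ht2⟩ := ht
    have htp : 0 < t := lt_of_le_of_lt (le_max_left _ _) ht1
    have htq : 0 < 1 + t - γ1 - γ2 := by
      have := lt_of_le_of_lt (le_max_right 0 (γ1+γ2-1)) ht1; linarith
    have hta : 0 < γ1 - t := by linarith [mul_pos hg1 hg2c]
    have htb : 0 < γ2 - t := by linarith [mul_pos hg2 hg1c]
    have htG : 0 < (γ1+γ2)/2 - t := by linarith
    have d1 : HasDerivAt (fun t : ℝ =>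
        t * (Real.log (γ1*γ2) - Real.log ((γ1*γ1 + γ2*γ2)/2)))
        (1 * (Real.log (γ1*γ2) - Real.log ((γ1*γ1 + γ2*γ2)/2))) t :=
      (hasDerivAt_id t).mul_const _
    have d2 : HasDerivAt (fun t : ℝ => (1 + t - γ1 - γ2) * (Real.log ((1-γ1)*(1-γ2))
          - Real.log (((1-γ1)*(1-γ1) + (1-γ2)*(1-γ2))/2)))
        (1 * (Real.log ((1-γ1)*(1-γ2)) - Real.log (((1-γ1)*(1-γ1) + (1-γ2)*(1-γ2))/2))) t :=
      ((((hasDerivAt_id t).const_add 1).sub_const γ1).sub_const γ2).mul_const _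
    have d3i : HasDerivAt (fun t : ℝ => (γ1+γ2)/2 - t) (-1) t := by
      simpa using (hasDerivAt_id t).const_sub ((γ1+γ2)/2)
    have d3 : HasDerivAt (fun t : ℝ => ((γ1+γ2)/2 - t) * Real.log ((γ1+γ2)/2 - t))
        ((Real.log ((γ1+γ2)/2 - t) + 1) * (-1)) t := by
      simpa [Function.comp_def] using (Real.hasDerivAt_mul_log htG.ne').comp t d3i
    have d4 : HasDerivAt (fun t : ℝ =>
        ((γ1+γ2)/2 - t) * Real.log ((γ1*(1-γ1) + γ2*(1-γ2))/2))
        ((-1) * Real.log ((γ1*(1-γ1) + γ2*(1-γ2))/2)) t := d3i.mul_const _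
    have d5i : HasDerivAt (fun t : ℝ => γ1 - t) (-1) t := by
      simpa using (hasDerivAt_id t).const_sub γ1
    have d5 : HasDerivAt (fun t : ℝ => (γ1 - t) * Real.log (γ1 - t))
        ((Real.log (γ1 - t) + 1) * (-1)) t := by
      simpa [Function.comp_def] using (Real.hasDerivAt_mul_log hta.ne').comp t d5i
    have d6 : HasDerivAt (fun t : ℝ => (γ1 - t) * Real.log (γ1*(1-γ2)))
        ((-1) * Real.log (γ1*(1-γ2))) t := d5i.mul_const _
    have d7i : HasDerivAt (fun t : ℝ => γ2 - t) (-1) t := by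
      simpa using (hasDerivAt_id t).const_sub γ2
    have d7 : HasDerivAt (fun t : ℝ => (γ2 - t) * Real.log (γ2 - t))
        ((Real.log (γ2 - t) + 1) * (-1)) t := by
      simpa [Function.comp_def] using (Real.hasDerivAt_mul_log htb.ne').comp t d7i
    have d8 : HasDerivAt (fun t : ℝ => (γ2 - t) * Real.log (γ2*(1-γ1)))
        ((-1) * Real.log (γ2*(1-γ1))) t := d7i.mul_const _
    have dd := ((((((d1.add d2).add (d3.const_mul 2)).sub (d4.const_mul 2)).sub d5).add
      d6).sub d7).add d8
    rw [hφ]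
    exact dd.congr_deriv (by ring)
  have hlb : max 0 (γ1+γ2-1) ≤ γ1*γ2 := by
    apply max_le (by positivity)
    linarith [mul_pos hg1c hg2c]
  have hmono : AntitoneOn φ (Set.Icc (max 0 (γ1+γ2-1)) (γ1*γ2)) := by
    apply antitoneOn_of_deriv_nonpos (convex_Icc _ _) hcont.continuousOn
    · intro x hx
      exact (hder x hx).differentiableAt.differentiableWithinAt
    · intro x hx
      rw [(hder x hx).deriv]
      rw [interior_Icc] at hx
      obtain ⟨hx1, hx2⟩ := hx
      have hxa : 0 < γ1 - x := by linarith [mul_pos hg1 hg2c]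
      have hxb : 0 < γ2 - x := by linarith [mul_pos hg2 hg1c]
      have hxG : 0 < (γ1+γ2)/2 - x := by linarith
      have bk1 : Real.log (γ1 - x) + Real.log (γ2 - x) ≤ 2*Real.log ((γ1+γ2)/2 - x) := by
        have e : (γ1-x)*(γ2-x) ≤ ((γ1+γ2)/2 - x)*((γ1+γ2)/2 - x) := by linarith [sq_nonneg (γ1-γ2)]
        have h := Real.log_le_log (mul_pos hxa hxb) e
        rw [Real.log_mul hxa.ne' hxb.ne', Real.log_mul hxG.ne' hxG.ne'] at h
        linarith
      have bk2 : 2*Real.log ((γ1*(1-γ1) + γ2*(1-γ2))/2)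
          ≤ Real.log ((γ1*γ1 + γ2*γ2)/2) + Real.log (((1-γ1)*(1-γ1) + (1-γ2)*(1-γ2))/2) := by
        have e : ((γ1*(1-γ1) + γ2*(1-γ2))/2) * ((γ1*(1-γ1) + γ2*(1-γ2))/2)
            ≤ ((γ1*γ1 + γ2*γ2)/2) * (((1-γ1)*(1-γ1) + (1-γ2)*(1-γ2))/2) := by
          linarith [sq_nonneg (γ1*(1-γ2) - γ2*(1-γ1))]
        have h := Real.log_le_log (mul_pos hw hw) e
        rw [Real.log_mul hw.ne' hw.ne', Real.log_mul hR1b.ne' hR4b.ne'] at h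
        linarith
      have bk3 : Real.log (γ1*γ2) + Real.log ((1-γ1)*(1-γ2)) - Real.log (γ1*(1-γ2))
          - Real.log (γ2*(1-γ1)) = 0 := by
        rw [Real.log_mul hg1.ne' hg2.ne', Real.log_mul hg1c.ne' hg2c.ne',
          Real.log_mul hg1.ne' hg2c.ne', Real.log_mul hg2.ne' hg1c.ne']
        ring
      linarith
  have hmem_p : p ∈ Set.Icc (max 0 (γ1+γ2-1)) (γ1*γ2) :=
    ⟨max_le hp0 (by linarith), hp⟩
  have hmem_e : γ1*γ2 ∈ Set.Icc (max 0 (γ1+γ2-1)) (γ1*γ2) := ⟨hlb, le_refl _⟩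
  have key := hmono hmem_p hmem_e hp
  have hend : 0 ≤ φ (γ1*γ2) := by
    have h3 := ls3 (show (0:ℝ) ≤ γ1*γ2 by positivity)
      (show (0:ℝ) ≤ 2*((γ1+γ2)/2 - γ1*γ2) by linarith [mul_pos hg1 hg2c, mul_pos hg2 hg1c])
      (show (0:ℝ) ≤ (1-γ1)*(1-γ2) by positivity)
      hR1b (show (0:ℝ) < 2*((γ1*(1-γ1) + γ2*(1-γ2))/2) by linarith)
      hR4b (by ring)
    rw [dbl (show (0:ℝ) ≤ (γ1+γ2)/2 - γ1*γ2 by linarith [mul_pos hg1 hg2c, mul_pos hg2 hg1c]) hw] at h3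
    rw [hφ]
    simp only []
    rw [show γ1 - γ1*γ2 = γ1*(1-γ2) by ring, show γ2 - γ1*γ2 = γ2*(1-γ1) by ring,
      show 1 + γ1*γ2 - γ1 - γ2 = (1-γ1)*(1-γ2) by ring]
    linarith
  have hphi : 0 ≤ φ p := le_trans hend key
  rw [hφ] at hphi
  simp only [] at hphi
  -- expand composite logs
  have L1 : Real.log (γ1*γ1) = Real.log γ1 + Real.log γ1 := Real.log_mul hg1.ne' hg1.ne'
  have L2 : Real.log (γ2*γ2) = Real.log γ2 + Real.log γ2 := Real.log_mul hg2.ne' hg2.ne'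
  have L3 : Real.log (γ1*(1-γ1)) = Real.log γ1 + Real.log (1-γ1) := Real.log_mul hg1.ne' hg1c.ne'
  have L4 : Real.log (γ2*(1-γ2)) = Real.log γ2 + Real.log (1-γ2) := Real.log_mul hg2.ne' hg2c.ne'
  have L5 : Real.log ((1-γ1)*(1-γ1)) = Real.log (1-γ1) + Real.log (1-γ1) :=
    Real.log_mul hg1c.ne' hg1c.ne'
  have L6 : Real.log ((1-γ2)*(1-γ2)) = Real.log (1-γ2) + Real.log (1-γ2) :=
    Real.log_mul hg2c.ne' hg2c.ne'
  have L7 : Real.log (γ1*γ2) = Real.log γ1 + Real.log γ2 := Real.log_mul hg1.ne' hg2.ne'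
  have L8 : Real.log (γ1*(1-γ2)) = Real.log γ1 + Real.log (1-γ2) := Real.log_mul hg1.ne' hg2c.ne'
  have L9 : Real.log (γ2*(1-γ1)) = Real.log γ2 + Real.log (1-γ1) := Real.log_mul hg2.ne' hg1c.ne'
  have L10 : Real.log ((1-γ1)*(1-γ2)) = Real.log (1-γ1) + Real.log (1-γ2) :=
    Real.log_mul hg1c.ne' hg2c.ne'
  rw [L1, L2] at c1
  rw [L3, L4] at c2
  rw [L5, L6] at c3
  rw [L7, L8, L9, L10] at hphi
  linarith [c1, c2, c3, hphi]

private lemma nat_main (γ1 γ2 p1 p2 : ℝ)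
    (hγ1l : 0 ≤ γ1) (hγ1r : γ1 ≤ 1) (hγ2l : 0 ≤ γ2) (hγ2r : γ2 ≤ 1)
    (hp1l : max 0 (2 * γ1 - 1) ≤ p1) (hp1u : p1 ≤ γ1)
    (hp2l : max 0 (2 * γ2 - 1) ≤ p2) (hp2u : p2 ≤ γ2)
    (hp : (p1 + p2) / 2 ≤ γ1 * γ2) :
    (-(p1 * Real.log p1) - (γ1 - p1) * Real.log (γ1 - p1) - (γ1 - p1) * Real.log (γ1 - p1)
        - (1 + p1 - 2 * γ1) * Real.log (1 + p1 - 2 * γ1))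
      + (-(p2 * Real.log p2) - (γ2 - p2) * Real.log (γ2 - p2) - (γ2 - p2) * Real.log (γ2 - p2)
        - (1 + p2 - 2 * γ2) * Real.log (1 + p2 - 2 * γ2))
      ≤ 2 * (-((p1 + p2) / 2 * Real.log ((p1 + p2) / 2))
        - (γ1 - (p1 + p2) / 2) * Real.log (γ1 - (p1 + p2) / 2)
        - (γ2 - (p1 + p2) / 2) * Real.log (γ2 - (p1 + p2) / 2)
        - (1 + (p1 + p2) / 2 - γ1 - γ2) * Real.log (1 + (p1 + p2) / 2 - γ1 - γ2)) := by
  have hp10 : 0 ≤ p1 := le_trans (le_max_left _ _) hp1l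
  have hb1 : 0 ≤ 1 + p1 - 2*γ1 := by linarith [le_trans (le_max_right _ _) hp1l]
  have hp20 : 0 ≤ p2 := le_trans (le_max_left _ _) hp2l
  have hb2 : 0 ≤ 1 + p2 - 2*γ2 := by linarith [le_trans (le_max_right _ _) hp2l]
  rcases eq_or_lt_of_le hγ1l with h10 | hg1
  · -- γ1 = 0
    have hp1z : p1 = 0 := le_antisymm (by linarith) hp10
    have hp2z : p2 = 0 := le_antisymm (by nlinarith) hp20
    subst hp1z; subst hp2z
    have h10' := h10.symm
    subst h10'
    have hγ2h : γ2 ≤ 1/2 := by linarith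
    have hu : (0:ℝ) ≤ 1 - 2*γ2 := by linarith
    have h := half_step hu
    rw [show (1 - 2*γ2) + 1 = 2*(1-γ2) by ring,
      Real.log_mul two_ne_zero (show (1:ℝ)-γ2 ≠ 0 by intro hh; linarith [hh]; done)] at h
    norm_num [Real.log_zero, Real.log_one]
    ring_nf
    ring_nf at h
    linarith [h]
  rcases eq_or_lt_of_le hγ2l with h20 | hg2
  · -- γ2 = 0
    have hp2z : p2 = 0 := le_antisymm (by linarith) hp20
    have hp1z : p1 = 0 := le_antisymm (by nlinarith) hp10
    subst hp1z; subst hp2z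
    have h20' := h20.symm
    subst h20'
    have hγ1h : γ1 ≤ 1/2 := by linarith
    have hu : (0:ℝ) ≤ 1 - 2*γ1 := by linarith
    have h := half_step hu
    rw [show (1 - 2*γ1) + 1 = 2*(1-γ1) by ring,
      Real.log_mul two_ne_zero (show (1:ℝ)-γ1 ≠ 0 by intro hh; linarith [hh]; done)] at h
    norm_num [Real.log_zero, Real.log_one]
    ring_nf
    ring_nf at h
    linarith [h]
  rcases eq_or_lt_of_le hγ1r with h11 | hg1'
  · -- γ1 = 1
    subst h11
    have h1p : (1:ℝ) ≤ p1 := by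
      have := le_max_right (0:ℝ) (2*1-1); norm_num at this ⊢; linarith [hp1l]
    have hp1o : p1 = 1 := le_antisymm hp1u h1p
    subst hp1o
    have h2l : 2*γ2 - 1 ≤ p2 := le_trans (le_max_right _ _) hp2l
    have hp2e : p2 = 2*γ2 - 1 := by
      have := hp; linarith
    subst hp2e
    have h05 : (1:ℝ)/2 ≤ γ2 := by linarith
    have hu : (0:ℝ) ≤ 2*γ2 - 1 := by linarith
    have h := half_step hu
    rw [show (2*γ2 - 1) + 1 = 2*γ2 by ring,
      Real.log_mul two_ne_zero (show γ2 ≠ 0 by intro hh; linarith [hh]; done)] at h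
    norm_num [Real.log_zero, Real.log_one]
    ring_nf
    ring_nf at h
    linarith [h]
  rcases eq_or_lt_of_le hγ2r with h21 | hg2'
  · -- γ2 = 1
    subst h21
    have h2p : (1:ℝ) ≤ p2 := by
      have := le_max_right (0:ℝ) (2*1-1); norm_num at this ⊢; linarith [hp2l]
    have hp2o : p2 = 1 := le_antisymm hp2u h2p
    subst hp2o
    have h1l : 2*γ1 - 1 ≤ p1 := le_trans (le_max_right _ _) hp1l
    have hp1e : p1 = 2*γ1 - 1 := by
      have := hp; linarith
    subst hp1e
    have h05 : (1:ℝ)/2 ≤ γ1 := by linarith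
    have hu : (0:ℝ) ≤ 2*γ1 - 1 := by linarith
    have h := half_step hu
    rw [show (2*γ1 - 1) + 1 = 2*γ1 by ring,
      Real.log_mul two_ne_zero (show γ1 ≠ 0 by intro hh; linarith [hh]; done)] at h
    norm_num [Real.log_zero, Real.log_one]
    ring_nf
    ring_nf at h
    linarith [h]
  · exact core γ1 γ2 p1 p2 hg1 hg1' hg2 hg2' hp10 hp1u hb1 hp20 hp2u hb2 hp


noncomputable def H4 (a1 a2 a3 a4 : ℝ) : ℝ :=
  -(a1 * Real.logb 2 a1) - a2 * Real.logb 2 a2 - a3 * Real.logb 2 a3 - a4 * Real.logb 2 a4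

theorem stmt_4 (γ1 γ2 p1 p2 : ℝ)
    (hγ1 : γ1 ∈ Set.Icc (0:ℝ) 1) (hγ2 : γ2 ∈ Set.Icc (0:ℝ) 1)
    (hp1l : max 0 (2 * γ1 - 1) ≤ p1) (hp1u : p1 ≤ γ1)
    (hp2l : max 0 (2 * γ2 - 1) ≤ p2) (hp2u : p2 ≤ γ2)
    (hp : (p1 + p2) / 2 ≤ γ1 * γ2) :
    (1 / 2) * (H4 p1 (γ1 - p1) (γ1 - p1) (1 + p1 - 2 * γ1)
      + H4 p2 (γ2 - p2) (γ2 - p2) (1 + p2 - 2 * γ2))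
    ≤ H4 ((p1 + p2) / 2) (γ1 - (p1 + p2) / 2) (γ2 - (p1 + p2) / 2)
        (1 + (p1 + p2) / 2 - γ1 - γ2) := by

  obtain ⟨hγ1l, hγ1r⟩ := hγ1
  obtain ⟨hγ2l, hγ2r⟩ := hγ2
  have h2 : (0:ℝ) < Real.log 2 := Real.log_pos one_lt_two
  have main := nat_main γ1 γ2 p1 p2 hγ1l hγ1r hγ2l hγ2r hp1l hp1u hp2l hp2u hp
  have expand : ∀ a b c d : ℝ, H4 a b c d
      = (-(a * Real.log a) - b * Real.log b - c * Real.log c - d * Real.log d) / Real.log 2 := by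
    intro a b c d
    simp only [H4, Real.logb]
    ring
  simp only [expand]
  rw [← add_div, ← mul_div_assoc, div_le_div_iff₀ h2 h2]
  nlinarith [mul_le_mul_of_nonneg_right main h2.le]
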